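/- Let n ≥ 1, let (a_{αβ})_{α,β=1}^n be a symmetric matrix of real numbers, and let (x_α, u_α, T_α) be a differentiable solution of the KB-CS model with T_α(t) > 0 for all α and t. Then the total entropy S(t) := ∑_{α=1}^n ln T_α(t) satisfies, for all t, (d/dt) S(t) = (1/(2n)) ∑_{α,β=1}^n (a_{αβ}/(T_α T_β)) [ (T_α + T_β) ‖u_β − u_α‖²/2 + (T_β − T_α)² ]. In particular S is nondecreasing when all a_{αβ} ≥ 0. -/

import Mathlib

open RealInnerProductSpace

theorem stmt10 (n d : ℕ) (hn : 1 ≤ n)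
    (a : Fin n → Fin n → ℝ) (ha_symm : ∀ α β, a α β = a β α)
    (x u : Fin n → ℝ → EuclideanSpace ℝ (Fin d)) (T : Fin n → ℝ → ℝ)
    (hTpos : ∀ α t, 0 < T α t)
    (hx : ∀ α t, HasDerivAt (x α) (u α t) t)
    (hu : ∀ α t, HasDerivAt (u α)
      ((n : ℝ)⁻¹ • ∑ β, a α β • (u β t - u α t)) t)
    (hT : ∀ α t, HasDerivAt (fun s => T α s + ‖u α s‖ ^ 2 / 2)
      ((n : ℝ)⁻¹ * ∑ β, a α β *
        ((T β t + ‖u β t‖ ^ 2 / 2) - (T α t + ‖u α t‖ ^ 2 / 2))) t) :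
    (∀ t, HasDerivAt (fun s => ∑ α, Real.log (T α s))
      ((1 / (2 * n) : ℝ) * ∑ α, ∑ β, a α β / (T α t * T β t) *
        ((T α t + T β t) * ‖u β t - u α t‖ ^ 2 / 2 + (T β t - T α t) ^ 2)) t) ∧
    ((∀ α β, 0 ≤ a α β) → Monotone (fun t => ∑ α, Real.log (T α t))) := by
  have hn0 : (n : ℝ) ≠ 0 := by positivity
  -- derivative of T α itself
  have hT' : ∀ α t, HasDerivAt (T α)
      ((n : ℝ)⁻¹ * ∑ β, a α β * ((T β t - T α t) + ‖u β t - u α t‖ ^ 2 / 2)) t := by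
    intro α t
    have hnorm : HasDerivAt (fun s => ‖u α s‖ ^ 2 / 2)
        (⟪u α t, (n : ℝ)⁻¹ • ∑ β, a α β • (u β t - u α t)⟫) t := by
      have h1 := ((hu α t).inner ℝ (hu α t)).div_const 2
      have heq : (fun s : ℝ => ⟪u α s, u α s⟫ / 2) = fun s => ‖u α s‖ ^ 2 / 2 := by
        funext s; rw [real_inner_self_eq_norm_sq]
      rw [heq] at h1
      refine HasDerivAt.congr_deriv h1 ?_
      rw [real_inner_comm ((n : ℝ)⁻¹ • ∑ β, a α β • (u β t - u α t)) (u α t)]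
      ring
    have h2 := (hT α t).fun_sub hnorm
    have heq2 : (fun s => T α s + ‖u α s‖ ^ 2 / 2 - ‖u α s‖ ^ 2 / 2) = T α := by
      funext s; ring
    rw [heq2] at h2
    refine HasDerivAt.congr_deriv h2 ?_
    rw [real_inner_smul_right, inner_sum (𝕜 := ℝ), ← mul_sub, Finset.mul_sum, ← Finset.sum_sub_distrib]
    rw [Finset.mul_sum]
    refine Finset.sum_congr rfl fun β _ => ?_
    rw [real_inner_smul_right]
    have h3 : ‖u β t - u α t‖ ^ 2 = ‖u β t‖ ^ 2 - 2 * ⟪u β t, u α t⟫ + ‖u α t‖ ^ 2 :=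
      norm_sub_sq_real _ _
    rw [inner_sub_right (𝕜 := ℝ), real_inner_self_eq_norm_sq, real_inner_comm (u β t) (u α t)]
    rw [h3]; ring
  -- derivative of log T α
  have hlog : ∀ α t, HasDerivAt (fun s => Real.log (T α s))
      (((n : ℝ)⁻¹ * ∑ β, a α β * ((T β t - T α t) + ‖u β t - u α t‖ ^ 2 / 2)) / T α t) t :=
    fun α t => (hT' α t).log (hTpos α t).ne'
  have hsum : ∀ t, HasDerivAt (fun s => ∑ α, Real.log (T α s))
      (∑ α, ((n : ℝ)⁻¹ * ∑ β, a α β * ((T β t - T α t) + ‖u β t - u α t‖ ^ 2 / 2)) / T α t) t :=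
    fun t => HasDerivAt.fun_sum fun α _ => hlog α t
  -- algebraic identity between the two derivative expressions
  have key : ∀ t, (∑ α, ((n : ℝ)⁻¹ * ∑ β, a α β * ((T β t - T α t) + ‖u β t - u α t‖ ^ 2 / 2)) / T α t)
      = (1 / (2 * n) : ℝ) * ∑ α, ∑ β, a α β / (T α t * T β t) *
        ((T α t + T β t) * ‖u β t - u α t‖ ^ 2 / 2 + (T β t - T α t) ^ 2) := by
    intro t
    set f : Fin n → Fin n → ℝ := fun α β =>
      a α β * ((T β t - T α t) + ‖u β t - u α t‖ ^ 2 / 2) / ((n : ℝ) * T α t) with hf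
    have hL : (∑ α, ((n : ℝ)⁻¹ * ∑ β, a α β * ((T β t - T α t) + ‖u β t - u α t‖ ^ 2 / 2)) / T α t)
        = ∑ α, ∑ β, f α β := by
      refine Finset.sum_congr rfl fun α _ => ?_
      rw [Finset.mul_sum, Finset.sum_div]
      refine Finset.sum_congr rfl fun β _ => ?_
      rw [hf]
      field_simp
    rw [hL]
    have hswap : (∑ α, ∑ β, f α β) = ∑ α, ∑ β, f β α := Finset.sum_comm
    have hpt : ∀ α β, f α β + f β α = ((n : ℝ))⁻¹ * (a α β / (T α t * T β t) *
        ((T α t + T β t) * ‖u β t - u α t‖ ^ 2 / 2 + (T β t - T α t) ^ 2)) := by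
      intro α β
      rw [hf]
      simp only
      rw [ha_symm β α, norm_sub_rev (u α t) (u β t)]
      have hTα := (hTpos α t).ne'
      have hTβ := (hTpos β t).ne'
      field_simp
      ring
    have h2 : (2 : ℝ) * ∑ α, ∑ β, f α β
        = ∑ α, ∑ β, (f α β + f β α) := by
      simp only [Finset.sum_add_distrib]
      rw [← hswap]; ring
    have h3 : (∑ α, ∑ β, (f α β + f β α)) = ((n : ℝ))⁻¹ * ∑ α, ∑ β,
        (a α β / (T α t * T β t) *
        ((T α t + T β t) * ‖u β t - u α t‖ ^ 2 / 2 + (T β t - T α t) ^ 2)) := by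
      rw [Finset.mul_sum]
      refine Finset.sum_congr rfl fun α _ => ?_
      rw [Finset.mul_sum]
      exact Finset.sum_congr rfl fun β _ => hpt α β
    have := h2.trans h3
    field_simp at this ⊢
    linarith
  have hmain : ∀ t, HasDerivAt (fun s => ∑ α, Real.log (T α s))
      ((1 / (2 * n) : ℝ) * ∑ α, ∑ β, a α β / (T α t * T β t) *
        ((T α t + T β t) * ‖u β t - u α t‖ ^ 2 / 2 + (T β t - T α t) ^ 2)) t := by
    intro t
    rw [← key t]
    exact hsum t
  refine ⟨hmain, fun ha => ?_⟩
  refine monotone_of_hasDerivAt_nonneg (f' := fun t =>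
    (1 / (2 * n) : ℝ) * ∑ α, ∑ β, a α β / (T α t * T β t) *
        ((T α t + T β t) * ‖u β t - u α t‖ ^ 2 / 2 + (T β t - T α t) ^ 2)) hmain ?_
  intro t
  have : ∀ α β : Fin n, 0 ≤ a α β / (T α t * T β t) *
      ((T α t + T β t) * ‖u β t - u α t‖ ^ 2 / 2 + (T β t - T α t) ^ 2) := by
    intro α β
    have h1 := hTpos α t
    have h2 := hTpos β t
    have h3 := ha α β
    positivity
  have h4 : (0 : ℝ) ≤ ∑ α, ∑ β, a α β / (T α t * T β t) *
      ((T α t + T β t) * ‖u β t - u α t‖ ^ 2 / 2 + (T β t - T α t) ^ 2) :=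
    Finset.sum_nonneg fun α _ => Finset.sum_nonneg fun β _ => this α β
  positivity
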